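/- Suppose a Markov kernel P on (X,F) with stationary distribution π satisfies the uniform minorization condition P(x,A) ≥ ε·ν(A) for all x ∈ X and A ∈ F, where ε ∈ (0,1] and ν is a probability measure. Then for all x ∈ X and n ≥ 1, ‖Pⁿ(x,·) − π(·)‖_TV ≤ (1 − ε)ⁿ. -/

import Mathlib

open MeasureTheory Set
open scoped ENNReal

noncomputable def tvDist {X : Type*} [MeasurableSpace X] (μ ν : Measure X) : ℝ :=
  ⨆ A : {s : Set X // MeasurableSet s}, |(μ A.1).toReal - (ν A.1).toReal|

section Aux
variable {X : Type*} [MeasurableSpace X]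

lemma my_sub_sub (a b c : ℝ≥0∞) (ha : a ≠ ⊤) (h1 : b ≤ a) (h2 : c ≤ b) :
    a - (b - c) = a - b + c := by
  have hbc : b - c ≠ ⊤ := (lt_of_le_of_lt (tsub_le_self.trans h1) ha.lt_top).ne
  refine ENNReal.sub_eq_of_eq_add hbc ?_
  rw [add_assoc, add_comm c, tsub_add_cancel_of_le h2, tsub_add_cancel_of_le h1]

lemma bind_prob (P : X → Measure X) [∀ x, IsProbabilityMeasure (P x)]
    (hP : Measurable P) (μ : Measure X) [IsProbabilityMeasure μ] :
    IsProbabilityMeasure (μ.bind P) := by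
  constructor
  rw [Measure.bind_apply MeasurableSet.univ hP.aemeasurable]
  simp [measure_univ]

/-- One step of the Doeblin minorization recursion. -/
lemma step_lemma (P : X → Measure X) [∀ x, IsProbabilityMeasure (P x)]
    (hP : Measurable P) (ε : ℝ≥0∞) (ν : Measure X) [IsProbabilityMeasure ν]
    (hminor : ∀ x (A : Set X), MeasurableSet A → ε * ν A ≤ P x A)
    (c : ℝ≥0∞) (hc : c ≤ 1)
    (ρ μ : Measure X) [IsProbabilityMeasure ρ] [IsProbabilityMeasure μ]
    (h : c • ρ ≤ μ) :
    c • ρ.bind P + ((1 - c) * ε) • ν ≤ μ.bind P := by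
  refine Measure.le_iff.mpr fun A hA => ?_
  set a : ℝ≥0∞ := ε * ν A with ha_def
  set f : X → ℝ≥0∞ := fun y => P y A with hf_def
  have hf : Measurable f := (Measure.measurable_coe hA).comp hP
  have hfa : ∀ y, a ≤ f y := fun y => hminor y A hA
  have hsplit : ∀ (m : Measure X), IsProbabilityMeasure m →
      ∫⁻ y, f y ∂m = a + ∫⁻ y, (f y - a) ∂m := by
    intro m hm
    calc ∫⁻ y, f y ∂m = ∫⁻ y, (a + (f y - a)) ∂m :=
          lintegral_congr fun y => (add_tsub_cancel_of_le (hfa y)).symm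
      _ = a + ∫⁻ y, (f y - a) ∂m := by
          rw [lintegral_add_left measurable_const, lintegral_const, measure_univ, mul_one]
  have hD : c * ∫⁻ y, (f y - a) ∂ρ ≤ ∫⁻ y, (f y - a) ∂μ := by
    rw [← smul_eq_mul, ← lintegral_smul_measure]
    exact lintegral_mono' h le_rfl
  have hμbind : (μ.bind P) A = ∫⁻ y, f y ∂μ := Measure.bind_apply hA hP.aemeasurable
  have hρbind : (ρ.bind P) A = ∫⁻ y, f y ∂ρ := Measure.bind_apply hA hP.aemeasurable
  simp only [Measure.add_apply, Measure.smul_apply, smul_eq_mul]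
  rw [hμbind, hρbind, hsplit μ inferInstance, hsplit ρ inferInstance]
  set Dρ := ∫⁻ y, (f y - a) ∂ρ
  set Dμ := ∫⁻ y, (f y - a) ∂μ
  calc c * (a + Dρ) + (1 - c) * ε * ν A = (c + (1 - c)) * a + c * Dρ := by
        rw [mul_assoc, ← ha_def]; ring
    _ = a + c * Dρ := by rw [add_tsub_cancel_of_le hc, one_mul]
    _ ≤ a + Dμ := add_le_add_right hD _

lemma one_sided (c : ℝ≥0∞) (hc : c ≤ 1) (μ m₁ m₂ : Measure X)
    [IsProbabilityMeasure μ] [IsProbabilityMeasure m₁] [IsProbabilityMeasure m₂]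
    (h1 : c • μ ≤ m₁) (h2 : c • μ ≤ m₂) (A : Set X) (hA : MeasurableSet A) :
    m₁ A ≤ (1 - c) + m₂ A := by
  have hcompl : m₁ A + c * μ Aᶜ ≤ 1 := by
    have := Measure.le_iff.mp h1 Aᶜ hA.compl
    simp only [Measure.smul_apply, smul_eq_mul] at this
    calc m₁ A + c * μ Aᶜ ≤ m₁ A + m₁ Aᶜ := add_le_add_right this _
      _ = 1 := by rw [measure_add_measure_compl hA, measure_univ]
  have hμc : μ Aᶜ = 1 - μ A := prob_compl_eq_one_sub hA
  have hfin : μ A ≤ 1 := prob_le_one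
  have key : m₁ A ≤ 1 - c * μ Aᶜ := ENNReal.le_sub_of_add_le_right
    (ENNReal.mul_ne_top (lt_of_le_of_lt hc (by simp)).ne (measure_lt_top μ Aᶜ).ne) hcompl
  have : (1 : ℝ≥0∞) - c * μ Aᶜ = (1 - c) + c * μ A := by
    rw [hμc, ENNReal.mul_sub (fun _ _ => (lt_of_le_of_lt hc (by simp)).ne), mul_one]
    exact my_sub_sub 1 c (c * μ A) (by simp) hc (mul_le_of_le_one_right zero_le hfin)
  rw [this] at key
  refine key.trans (add_le_add_right ?_ _)
  have := Measure.le_iff.mp h2 A hA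
  simpa using this

lemma tv_bound (c : ℝ≥0∞) (hc : c ≤ 1) (μ m₁ m₂ : Measure X)
    [IsProbabilityMeasure μ] [IsProbabilityMeasure m₁] [IsProbabilityMeasure m₂]
    (h1 : c • μ ≤ m₁) (h2 : c • μ ≤ m₂) (A : Set X) (hA : MeasurableSet A) :
    |(m₁ A).toReal - (m₂ A).toReal| ≤ (1 - c).toReal := by
  have hfin : ∀ (m : Measure X) [IsProbabilityMeasure m], m A ≠ ⊤ :=
    fun m _ => (measure_lt_top m A).ne
  have conv : ∀ (ma mb : Measure X) [IsProbabilityMeasure ma] [IsProbabilityMeasure mb],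
      ma A ≤ (1 - c) + mb A → (ma A).toReal - (mb A).toReal ≤ (1 - c).toReal := by
    intro ma mb _ _ h
    have := ENNReal.toReal_mono (by finiteness) h
    rw [ENNReal.toReal_add (by finiteness) (hfin mb)] at this
    linarith
  rw [abs_sub_le_iff]
  exact ⟨conv m₁ m₂ (one_sided c hc μ m₁ m₂ h1 h2 A hA),
         conv m₂ m₁ (one_sided c hc μ m₂ m₁ h2 h1 A hA)⟩

end Aux

theorem stmt19 {X : Type*} [MeasurableSpace X]
    (P : X → Measure X) [∀ x, IsProbabilityMeasure (P x)]
    (hPmeas : Measurable P)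
    (π : Measure X) [IsProbabilityMeasure π]
    (hinv : π.bind P = π)
    (ε : ℝ≥0∞) (hε : 0 < ε) (hε1 : ε ≤ 1)
    (ν : Measure X) [IsProbabilityMeasure ν]
    (hminor : ∀ x (A : Set X), MeasurableSet A → ε * ν A ≤ P x A)
    -- the n-step kernel
    (Pn : ℕ → X → Measure X)
    (hPn0 : ∀ x, Pn 0 x = Measure.dirac x)
    (hPnsucc : ∀ n x, Pn (n + 1) x = (Pn n x).bind P) :
    ∀ x (n : ℕ), 1 ≤ n → tvDist (Pn n x) π ≤ (1 - ε.toReal) ^ n := by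
  have hprob : ∀ n x, IsProbabilityMeasure (Pn n x) := by
    intro n
    induction n with
    | zero => intro x; rw [hPn0]; infer_instance
    | succ n ih =>
      intro x; rw [hPnsucc]
      haveI := ih x
      exact bind_prob P hPmeas _
  -- key minorization claim
  have key : ∀ n : ℕ, ∃ μ : Measure X, IsProbabilityMeasure μ ∧
      (∀ x, (1 - (1 - ε) ^ n) • μ ≤ Pn n x) ∧ (1 - (1 - ε) ^ n) • μ ≤ π := by
    intro n
    induction n with
    | zero =>
      refine ⟨ν, inferInstance, ?_, ?_⟩ <;>
        simp [pow_zero, tsub_self, zero_smul, Measure.zero_le]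
    | succ n ih =>
      obtain ⟨μn, hμn, h1, h2⟩ := ih
      set q : ℝ≥0∞ := (1 - ε) ^ n with hq_def
      set c : ℝ≥0∞ := 1 - q with hc_def
      have hq1 : q ≤ 1 := pow_le_one' tsub_le_self n
      have hqtop : q ≠ ⊤ := (lt_of_le_of_lt hq1 (by simp)).ne
      have hc1 : c ≤ 1 := tsub_le_self
      have h1mc : 1 - c = q := ENNReal.sub_sub_cancel (by simp) hq1
      set c' : ℝ≥0∞ := 1 - (1 - ε) ^ (n + 1) with hc'_def
      have hc'1 : c' ≤ 1 := tsub_le_self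
      have hc'top : c' ≠ ⊤ := (lt_of_le_of_lt hc'1 (by simp)).ne
      have hqε : q * ε ≤ q := mul_le_of_le_one_right zero_le hε1
      have hc'eq : c' = c + q * ε := by
        rw [hc'_def, pow_succ, ENNReal.mul_sub (fun _ _ => hqtop), mul_one,
          my_sub_sub 1 q (q * ε) (by simp) hq1 hqε]
      have hc'0 : c' ≠ 0 := by
        rw [hc'_def]
        have hlt : (1 - ε) ^ (n + 1) < 1 :=
          pow_lt_one' (ENNReal.sub_lt_self (by simp) one_ne_zero hε.ne') n.succ_ne_zero
        exact (tsub_pos_of_lt hlt).ne'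
      haveI := hμn
      haveI : IsProbabilityMeasure (μn.bind P) := bind_prob P hPmeas μn
      set μ' : Measure X := c'⁻¹ • (c • μn.bind P + (q * ε) • ν) with hμ'_def
      have hc'smul : c' • μ' = c • μn.bind P + (q * ε) • ν := by
        rw [hμ'_def, smul_smul, ENNReal.mul_inv_cancel hc'0 hc'top, one_smul]
      have hμ'prob : IsProbabilityMeasure μ' := by
        constructor
        rw [hμ'_def]
        simp only [Measure.smul_apply, Measure.add_apply, smul_eq_mul, measure_univ, mul_one]
        rw [← hc'eq, ENNReal.inv_mul_cancel hc'0 hc'top]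
      refine ⟨μ', hμ'prob, ?_, ?_⟩
      · intro x
        rw [hc'smul, hPnsucc]
        haveI := hprob n x
        have := step_lemma P hPmeas ε ν hminor c hc1 μn (Pn n x) (h1 x)
        rwa [h1mc] at this
      · rw [hc'smul, ← hinv]
        have := step_lemma P hPmeas ε ν hminor c hc1 μn π h2
        rwa [h1mc] at this
  intro x n _
  obtain ⟨μ, hμ, h1, h2⟩ := key n
  haveI := hμ
  haveI := hprob n x
  have hq1 : (1 - ε) ^ n ≤ 1 := pow_le_one' tsub_le_self n
  have h1mc : 1 - (1 - (1 - ε) ^ n) = (1 - ε) ^ n := ENNReal.sub_sub_cancel (by simp) hq1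
  have hbd : ∀ A : {s : Set X // MeasurableSet s},
      |((Pn n x) A.1).toReal - (π A.1).toReal| ≤ (1 - ε.toReal) ^ n := by
    intro A
    have := tv_bound (1 - (1 - ε) ^ n) tsub_le_self μ (Pn n x) π (h1 x) h2 A.1 A.2
    rw [h1mc, ENNReal.toReal_pow, ENNReal.toReal_sub_of_le hε1 (by simp),
      ENNReal.toReal_one] at this
    exact this
  have hεR : ε.toReal ≤ 1 := by
    have := ENNReal.toReal_mono (by simp) hε1
    simpa using this
  exact Real.iSup_le hbd (pow_nonneg (by linarith) n)
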